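/- arXiv:2503.09254 — 2 statements merged into one kernel-verified Lean document; each statement's English description precedes it below -/
import Mathlib

section
/- Two term orderings <_1 and <_2 yield the same initial ideal of I, in_{<_1}(I) = in_{<_2}(I), if and only if they agree on the (finite) set of monomials occurring in the elements of the reduced Gröbner basis of I with respect to <_1 in the sense that in_{<_2}(g) = in_{<_1}(g) for every element g of that reduced Gröbner basis. -/
open MvPolynomial

/-- A term ordering on the monomials (exponent vectors) of `k[x_1, …, x_n]`:
a strict total well-ordering compatible with addition of exponents. -/
structure TermOrder (n : ℕ) where
  lt : (Fin n →₀ ℕ) → (Fin n →₀ ℕ) → Prop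
  irrefl : ∀ a, ¬ lt a a
  trans : ∀ a b c, lt a b → lt b c → lt a c
  trichotomous : ∀ a b, lt a b ∨ a = b ∨ lt b a
  wf : WellFounded lt
  add_right : ∀ a b c, lt a b → lt (a + c) (b + c)

variable {n : ℕ}

/-- `α` is the exponent vector of the `t`-leading term of `f`. -/
def TermOrder.IsLeadExp {k : Type*} [CommSemiring k] (t : TermOrder n)
    (f : MvPolynomial (Fin n) k) (α : Fin n →₀ ℕ) : Prop :=
  α ∈ f.support ∧ ∀ β ∈ f.support, β ≠ α → t.lt β α

open Classical in
/-- The exponent vector of the `t`-leading term of `f` (junk value `0` if none exists). -/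
noncomputable def TermOrder.leadExp {k : Type*} [CommSemiring k] (t : TermOrder n)
    (f : MvPolynomial (Fin n) k) : Fin n →₀ ℕ :=
  if h : ∃ α, t.IsLeadExp f α then h.choose else 0

/-- The leading term `in_t(f)` of `f` with respect to the term ordering `t`. -/
noncomputable def TermOrder.leadTerm {k : Type*} [CommSemiring k] (t : TermOrder n)
    (f : MvPolynomial (Fin n) k) : MvPolynomial (Fin n) k :=
  monomial (t.leadExp f) (coeff (t.leadExp f) f)

/-- The initial ideal `in_t(I)` of `I` with respect to the term ordering `t`. -/
noncomputable def initialIdealT {k : Type*} [CommSemiring k] (t : TermOrder n)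
    (I : Ideal (MvPolynomial (Fin n) k)) : Ideal (MvPolynomial (Fin n) k) :=
  Ideal.span { p | ∃ f ∈ I, f ≠ 0 ∧ p = t.leadTerm f }

/-- The `ω`-weight `⟨ω, α⟩` of an exponent vector `α`. -/
noncomputable def wt (ω : Fin n → ℝ) (α : Fin n →₀ ℕ) : ℝ :=
  ∑ i, ω i * (α i : ℝ)

/-- The initial form `in_ω(f)`: the sum of the terms of `f` of maximal `ω`-weight. -/
noncomputable def initialForm {k : Type*} [CommSemiring k] (ω : Fin n → ℝ)
    (f : MvPolynomial (Fin n) k) : MvPolynomial (Fin n) k :=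
  ∑ α ∈ f.support.filter (fun α => ∀ β ∈ f.support, wt ω β ≤ wt ω α),
    monomial α (coeff α f)

/-- The generalized initial ideal `in_ω(I)` of `I` with respect to the weight vector `ω`. -/
noncomputable def initialIdealW {k : Type*} [CommSemiring k] (ω : Fin n → ℝ)
    (I : Ideal (MvPolynomial (Fin n) k)) : Ideal (MvPolynomial (Fin n) k) :=
  Ideal.span { p | ∃ f ∈ I, f ≠ 0 ∧ p = initialForm ω f }

/-- The refinement `<_ω` of the weight vector `ω` by the term ordering `t`:
compare first by `ω`-weight, break ties with `t`. -/
def refineLt (ω : Fin n → ℝ) (t : TermOrder n) (α β : Fin n →₀ ℕ) : Prop :=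
  wt ω α < wt ω β ∨ (wt ω α = wt ω β ∧ t.lt α β)

/-- `G` is a Gröbner basis of `I` w.r.t. `t`: `G ⊆ I` and the leading terms of the
elements of `G` generate the initial ideal `in_t(I)`. -/
def IsGroebnerBasis {k : Type*} [CommSemiring k] (t : TermOrder n)
    (I : Ideal (MvPolynomial (Fin n) k)) (G : Finset (MvPolynomial (Fin n) k)) : Prop :=
  (∀ g ∈ G, g ∈ I) ∧
    Ideal.span ((fun g => t.leadTerm g) '' (G : Set (MvPolynomial (Fin n) k)))
      = initialIdealT t I

open Classical in
/-- `G` is the reduced (marked) Gröbner basis of `I` w.r.t. `t`: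
a Gröbner basis that is minimal, monic and reduced. -/
def IsReducedGB {k : Type*} [CommSemiring k] (t : TermOrder n)
    (I : Ideal (MvPolynomial (Fin n) k)) (G : Finset (MvPolynomial (Fin n) k)) : Prop :=
  IsGroebnerBasis t I G ∧
  (∀ g ∈ G, coeff (t.leadExp g) g = 1) ∧
  (∀ g ∈ G, ∀ g' ∈ G, g ≠ g' → ∀ α ∈ g.support, ¬ t.leadExp g' ≤ α) ∧
  (∀ g ∈ G, ¬ IsGroebnerBasis t I (G.erase g))

section Aux

open Pointwise

namespace TermOrder

theorem zero_lt' (t : TermOrder n) {a : Fin n →₀ ℕ} (ha : a ≠ 0) : t.lt 0 a := by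
  rcases t.trichotomous 0 a with h | h | h
  · exact h
  · exact absurd h.symm ha
  · exfalso
    have key : ∀ m : ℕ, t.lt ((m + 1) • a) (m • a) := by
      intro m
      have h2 := t.add_right a 0 (m • a) h
      rw [zero_add, add_comm] at h2
      rw [succ_nsmul]
      exact h2
    have hne : (Set.range fun m : ℕ => m • a).Nonempty := ⟨0 • a, ⟨0, rfl⟩⟩
    obtain ⟨m, hm⟩ := t.wf.min_mem _ hne
    exact t.wf.not_lt_min (Set.range fun m : ℕ => m • a) (x := (m + 1) • a) ⟨m + 1, rfl⟩
      (hm ▸ key m)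

theorem lt_of_le_of_ne' (t : TermOrder n) {a b : Fin n →₀ ℕ} (hle : a ≤ b) (hne : a ≠ b) :
    t.lt a b := by
  have hba : b - a + a = b := tsub_add_cancel_of_le hle
  have h0 : b - a ≠ 0 := by
    intro h
    rw [h, zero_add] at hba
    exact hne hba
  have h2 := t.add_right 0 (b - a) a (t.zero_lt' h0)
  rwa [zero_add, hba] at h2

theorem exists_max (t : TermOrder n) (s : Finset (Fin n →₀ ℕ)) (hs : s.Nonempty) :
    ∃ m ∈ s, ∀ b ∈ s, b ≠ m → t.lt b m := by
  classical
  induction s using Finset.induction_on with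
  | empty => simp at hs
  | @insert a s ha ih =>
    rcases s.eq_empty_or_nonempty with rfl | hne
    · refine ⟨a, by simp, ?_⟩
      intro b hb hba
      simp only [Finset.mem_insert, Finset.notMem_empty, or_false] at hb
      exact absurd hb hba
    · obtain ⟨m, hm, hmax⟩ := ih hne
      rcases t.trichotomous a m with h | rfl | h
      · refine ⟨m, Finset.mem_insert_of_mem hm, ?_⟩
        intro b hb hbm
        rcases Finset.mem_insert.mp hb with rfl | hbs
        · exact h
        · exact hmax b hbs hbm
      · refine ⟨a, Finset.mem_insert_self _ _, ?_⟩
        intro b hb hbm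
        rcases Finset.mem_insert.mp hb with rfl | hbs
        · exact absurd rfl hbm
        · exact hmax b hbs hbm
      · refine ⟨a, Finset.mem_insert_self _ _, ?_⟩
        intro b hb hba
        rcases Finset.mem_insert.mp hb with rfl | hbs
        · exact absurd rfl hba
        · by_cases hbm : b = m
          · exact hbm ▸ h
          · exact t.trans _ _ _ (hmax b hbs hbm) h

theorem isLeadExp_leadExp {k : Type*} [CommSemiring k] (t : TermOrder n)
    {f : MvPolynomial (Fin n) k} (hf : f ≠ 0) : t.IsLeadExp f (t.leadExp f) := by
  obtain ⟨m, hm, hmax⟩ := t.exists_max f.support (support_nonempty.mpr hf)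
  have hex : ∃ α, t.IsLeadExp f α := ⟨m, hm, hmax⟩
  rw [TermOrder.leadExp, dif_pos hex]
  exact hex.choose_spec

theorem leadExp_eq {k : Type*} [CommSemiring k] (t : TermOrder n)
    {f : MvPolynomial (Fin n) k} {α : Fin n →₀ ℕ} (hf : f ≠ 0) (h : t.IsLeadExp f α) :
    t.leadExp f = α := by
  have h2 := t.isLeadExp_leadExp hf
  by_contra hne
  have l1 := h.2 _ h2.1 hne
  have l2 := h2.2 _ h.1 (Ne.symm hne)
  exact t.irrefl _ (t.trans _ _ _ l1 l2)

theorem coeff_leadExp_ne_zero {k : Type*} [CommSemiring k] (t : TermOrder n)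
    {f : MvPolynomial (Fin n) k} (hf : f ≠ 0) : coeff (t.leadExp f) f ≠ 0 :=
  mem_support_iff.mp (t.isLeadExp_leadExp hf).1

theorem support_leadTerm {k : Type*} [CommSemiring k] (t : TermOrder n)
    {f : MvPolynomial (Fin n) k} (hf : f ≠ 0) :
    (t.leadTerm f).support = {t.leadExp f} := by
  classical
  rw [TermOrder.leadTerm, support_monomial, if_neg (t.coeff_leadExp_ne_zero hf)]

end TermOrder

/-- Membership in the monomial ideal generated by the leading terms of `G` forces
divisibility of every exponent in the support by some leading exponent. -/
theorem exists_le_of_mem_monomial_span {k : Type*} [CommSemiring k] (t1 : TermOrder n)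
    (G : Finset (MvPolynomial (Fin n) k))
    (hmonic : ∀ g ∈ G, coeff (t1.leadExp g) g ≠ 0)
    {q : MvPolynomial (Fin n) k}
    (hq : q ∈ Ideal.span ((fun g => t1.leadTerm g) '' (G : Set (MvPolynomial (Fin n) k))))
    {α : Fin n →₀ ℕ} (hα : α ∈ q.support) : ∃ g ∈ G, t1.leadExp g ≤ α := by
  classical
  refine Submodule.span_induction
    (p := fun x _ => ∀ β ∈ x.support, ∃ g ∈ G, t1.leadExp g ≤ β) ?_ ?_ ?_ ?_ hq α hα
  · rintro x ⟨g, hgG, rfl⟩ β hβ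
    have hg0 : g ≠ 0 := fun h => hmonic g hgG (by rw [h]; simp)
    rw [t1.support_leadTerm hg0, Finset.mem_singleton] at hβ
    exact ⟨g, hgG, hβ ▸ le_refl _⟩
  · simp
  · intro x y hx hy ihx ihy β hβ
    rcases Finset.mem_union.mp (support_add hβ) with h | h
    exacts [ihx β h, ihy β h]
  · intro a x hx ihx β hβ
    rw [smul_eq_mul] at hβ
    have h2 := support_mul a x hβ
    rw [Finset.mem_add] at h2
    obtain ⟨u, _, v, hv, rfl⟩ := h2
    obtain ⟨g, hgG, hle⟩ := ihx v hv
    exact ⟨g, hgG, le_trans hle le_add_self⟩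

/-- Division algorithm core: if `G` is a monic Gröbner basis for `t1` whose `t2`-leading
terms agree with the `t1`-leading terms, then the `t2`-leading term of every nonzero
element of `I` lies in the monomial ideal generated by the leading terms of `G`. -/
theorem leadTerm_mem_span {k : Type*} [Field k] (t1 t2 : TermOrder n)
    (I : Ideal (MvPolynomial (Fin n) k)) (G : Finset (MvPolynomial (Fin n) k))
    (hGI : ∀ g ∈ G, g ∈ I)
    (hmonic : ∀ g ∈ G, coeff (t1.leadExp g) g = 1)
    (hspan : Ideal.span ((fun g => t1.leadTerm g) '' (G : Set (MvPolynomial (Fin n) k)))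
      = initialIdealT t1 I)
    (hagree : ∀ g ∈ G, t2.leadTerm g = t1.leadTerm g) :
    ∀ f ∈ I, f ≠ 0 → t2.leadTerm f ∈
      Ideal.span ((fun g => t1.leadTerm g) '' (G : Set (MvPolynomial (Fin n) k))) := by
  classical
  have hmonic' : ∀ g ∈ G, coeff (t1.leadExp g) g ≠ 0 := fun g hg => by
    rw [hmonic g hg]; exact one_ne_zero
  suffices H : ∀ μ, ∀ f, f ∈ I → f ≠ 0 → t1.leadExp f = μ → t2.leadTerm f ∈
      Ideal.span ((fun g => t1.leadTerm g) '' (G : Set (MvPolynomial (Fin n) k))) by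
    intro f hfI hf0
    exact H _ f hfI hf0 rfl
  intro μ
  refine t1.wf.induction
    (C := fun μ => ∀ f, f ∈ I → f ≠ 0 → t1.leadExp f = μ → t2.leadTerm f ∈
      Ideal.span ((fun g => t1.leadTerm g) '' (G : Set (MvPolynomial (Fin n) k)))) μ ?_
  clear μ
  intro μ IH f hfI hf0 hμ
  subst hμ
  have hLf1 := t1.isLeadExp_leadExp (f := f) hf0
  have hLf2 := t2.isLeadExp_leadExp (f := f) hf0
  have hmem : t1.leadTerm f ∈
      Ideal.span ((fun g => t1.leadTerm g) '' (G : Set (MvPolynomial (Fin n) k))) := by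
    rw [hspan]
    exact Ideal.subset_span ⟨f, hfI, hf0, rfl⟩
  have hsup : t1.leadExp f ∈ (t1.leadTerm f).support := by
    rw [t1.support_leadTerm hf0]; exact Finset.mem_singleton_self _
  obtain ⟨g, hgG, hgle⟩ := exists_le_of_mem_monomial_span t1 G hmonic' hmem hsup
  have hg0 : g ≠ 0 := fun h => hmonic' g hgG (by rw [h]; simp)
  have hLg1 := t1.isLeadExp_leadExp (f := g) hg0
  have hgexp : t2.leadExp g = t1.leadExp g := by
    have hc := congrArg (coeff (t1.leadExp g)) (hagree g hgG)
    rw [TermOrder.leadTerm, TermOrder.leadTerm, coeff_monomial, coeff_monomial,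
      if_pos rfl] at hc
    by_contra hne
    rw [if_neg hne] at hc
    exact hmonic' g hgG hc.symm
  have hLg2 := t2.isLeadExp_leadExp (f := g) hg0
  rw [hgexp] at hLg2
  have hgen : t1.leadTerm g ∈
      Ideal.span ((fun g => t1.leadTerm g) '' (G : Set (MvPolynomial (Fin n) k))) :=
    Ideal.subset_span ⟨g, hgG, rfl⟩
  by_cases hcase : t1.leadExp f = t2.leadExp f
  · have heq : t2.leadTerm f =
        monomial (t1.leadExp f - t1.leadExp g) (coeff (t2.leadExp f) f) * t1.leadTerm g := by
      simp only [TermOrder.leadTerm]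
      rw [hmonic g hgG, monomial_mul, mul_one, tsub_add_cancel_of_le hgle, hcase]
    rw [heq]
    exact Ideal.mul_mem_left _ _ hgen
  · have hne12 : t1.leadExp f ≠ t2.leadExp f := hcase
    have hlt12 : t2.lt (t1.leadExp f) (t2.leadExp f) := hLf2.2 _ hLf1.1 hne12
    have hδ : t1.leadExp f - t1.leadExp g + t1.leadExp g = t1.leadExp f :=
      tsub_add_cancel_of_le hgle
    set q := monomial (t1.leadExp f - t1.leadExp g) (coeff (t1.leadExp f) f) * g with hqdef
    have hqsupp : ∀ β ∈ q.support,
        β = t1.leadExp f ∨ (t1.lt β (t1.leadExp f) ∧ t2.lt β (t1.leadExp f)) := by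
      intro β hβ
      rw [hqdef] at hβ
      have h2 := support_mul _ _ hβ
      rw [Finset.mem_add] at h2
      obtain ⟨u, hu, b, hb, rfl⟩ := h2
      have hu' : u = t1.leadExp f - t1.leadExp g :=
        Finset.mem_singleton.mp (support_monomial_subset hu)
      subst hu'
      rcases eq_or_ne b (t1.leadExp g) with rfl | hbne
      · exact Or.inl hδ
      · refine Or.inr ⟨?_, ?_⟩
        · have h1 := t1.add_right b (t1.leadExp g) (t1.leadExp f - t1.leadExp g)
            (hLg1.2 b hb hbne)
          rwa [add_comm b _, add_comm (t1.leadExp g) _, hδ] at h1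
        · have h1 := t2.add_right b (t1.leadExp g) (t1.leadExp f - t1.leadExp g)
            (hLg2.2 b hb hbne)
          rwa [add_comm b _, add_comm (t1.leadExp g) _, hδ] at h1
    have hqc2 : coeff (t2.leadExp f) q = 0 := by
      apply notMem_support_iff.mp
      intro hmem2
      rcases hqsupp _ hmem2 with h | h
      · exact hne12 h.symm
      · exact t2.irrefl _ (t2.trans _ _ _ h.2 hlt12)
    have hqc1 : coeff (t1.leadExp f) q = coeff (t1.leadExp f) f := by
      have h := coeff_monomial_mul (t1.leadExp g) (t1.leadExp f - t1.leadExp g)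
        (coeff (t1.leadExp f) f) g
      rw [hδ, hmonic g hgG, mul_one] at h
      rw [hqdef]
      exact h
    have hc2 : coeff (t2.leadExp f) f ≠ 0 := mem_support_iff.mp hLf2.1
    have hfq2 : coeff (t2.leadExp f) (f - q) = coeff (t2.leadExp f) f := by
      rw [coeff_sub, hqc2, sub_zero]
    have hf'0 : f - q ≠ 0 := by
      intro h
      rw [h, coeff_zero] at hfq2
      exact hc2 hfq2.symm
    have hsupp_sub : ∀ β, β ∈ (f - q).support → β ∈ f.support ∨ β ∈ q.support := by
      intro β hβ
      rw [sub_eq_add_neg] at hβ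
      rcases Finset.mem_union.mp (support_add hβ) with h | h
      · exact Or.inl h
      · exact Or.inr (by rwa [support_neg] at h)
    have hLf2' : t2.IsLeadExp (f - q) (t2.leadExp f) := by
      constructor
      · rw [mem_support_iff, hfq2]; exact hc2
      · intro β hβ hβne
        rcases hsupp_sub β hβ with h | h
        · exact hLf2.2 β h hβne
        · rcases hqsupp β h with heq | hh
          · exact heq ▸ hlt12
          · exact t2.trans _ _ _ hh.2 hlt12
    have hlt1' : t1.lt (t1.leadExp (f - q)) (t1.leadExp f) := by
      have hmem' := (t1.isLeadExp_leadExp hf'0).1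
      have hall : ∀ β ∈ (f - q).support, t1.lt β (t1.leadExp f) := by
        intro β hβ
        rcases eq_or_ne β (t1.leadExp f) with rfl | hne
        · exfalso
          rw [mem_support_iff, coeff_sub, hqc1, sub_self] at hβ
          exact hβ rfl
        · rcases hsupp_sub β hβ with h | h
          · exact hLf1.2 β h hne
          · rcases hqsupp β h with heq | hh
            · exact absurd heq hne
            · exact hh.1
      exact hall _ hmem'
    have hfq_lead : t2.leadExp (f - q) = t2.leadExp f := t2.leadExp_eq hf'0 hLf2'
    have hfq_lt : t2.leadTerm (f - q) = t2.leadTerm f := by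
      simp only [TermOrder.leadTerm]
      rw [hfq_lead, hfq2]
    have hfI' : f - q ∈ I := I.sub_mem hfI (I.mul_mem_left _ (hGI g hgG))
    have hfin := IH (t1.leadExp (f - q)) hlt1' (f - q) hfI' hf'0 rfl
    rwa [hfq_lt] at hfin

end Aux

/-- Two term orderings give the same initial ideal of `I` iff they agree on
the reduced Gröbner basis of `I` w.r.t. the first, in the sense that the leading terms
coincide. -/
theorem initialIdeal_eq_iff_agree_on_redGB {k : Type*} [Field k] (t1 t2 : TermOrder n)
    (I : Ideal (MvPolynomial (Fin n) k)) (G : Finset (MvPolynomial (Fin n) k))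
    (hG : IsReducedGB t1 I G) :
    initialIdealT t1 I = initialIdealT t2 I ↔
      ∀ g ∈ G, t2.leadTerm g = t1.leadTerm g := by
  obtain ⟨⟨hGI, hspan⟩, hmonic, hred, -⟩ := hG
  have hmonic' : ∀ g ∈ G, coeff (t1.leadExp g) g ≠ 0 := fun g hg => by
    rw [hmonic g hg]; exact one_ne_zero
  have hg0 : ∀ g ∈ G, g ≠ (0 : MvPolynomial (Fin n) k) := fun g hg h =>
    hmonic' g hg (by rw [h]; simp)
  constructor
  · intro hI g hgG
    have hLg1 := t1.isLeadExp_leadExp (hg0 g hgG)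
    have hLg2 := t2.isLeadExp_leadExp (hg0 g hgG)
    have hmem : t2.leadTerm g ∈
        Ideal.span ((fun g => t1.leadTerm g) '' (G : Set (MvPolynomial (Fin n) k))) := by
      rw [hspan, hI]
      exact Ideal.subset_span ⟨g, hGI g hgG, hg0 g hgG, rfl⟩
    have hsup : t2.leadExp g ∈ (t2.leadTerm g).support := by
      rw [t2.support_leadTerm (hg0 g hgG)]; exact Finset.mem_singleton_self _
    obtain ⟨g', hg'G, hle⟩ := exists_le_of_mem_monomial_span t1 G hmonic' hmem hsup
    have hgg' : g' = g := by
      by_contra hne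
      exact hred g hgG g' hg'G (fun h => hne h.symm) _ hLg2.1 hle
    rw [hgg'] at hle
    have hexp : t2.leadExp g = t1.leadExp g := by
      rcases eq_or_ne (t2.leadExp g) (t1.leadExp g) with h | h
      · exact h
      · exfalso
        have h1 : t1.lt (t1.leadExp g) (t2.leadExp g) :=
          t1.lt_of_le_of_ne' hle (fun e => h e.symm)
        have h2 : t1.lt (t2.leadExp g) (t1.leadExp g) := hLg1.2 _ hLg2.1 h
        exact t1.irrefl _ (t1.trans _ _ _ h1 h2)
    simp only [TermOrder.leadTerm]
    rw [hexp]
  · intro hagree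
    have himg : (fun g => t2.leadTerm g) '' (G : Set (MvPolynomial (Fin n) k)) =
        (fun g => t1.leadTerm g) '' (G : Set (MvPolynomial (Fin n) k)) :=
      Set.image_congr (fun g hg => hagree g hg)
    have hdiv := leadTerm_mem_span t1 t2 I G hGI hmonic hspan hagree
    apply le_antisymm
    · rw [← hspan, ← himg, Ideal.span_le]
      rintro p ⟨g, hgG, rfl⟩
      exact Ideal.subset_span ⟨g, hGI g hgG, hg0 g hgG, rfl⟩
    · show Ideal.span {p | ∃ f ∈ I, f ≠ 0 ∧ p = t2.leadTerm f} ≤ initialIdealT t1 I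
      rw [Ideal.span_le]
      rintro p ⟨f, hfI, hf0, rfl⟩
      rw [← hspan]
      exact hdiv f hfI hf0
end

section
/- If the generalized initial ideal in_ω(I) is a monomial ideal for some ω ∈ ℝ^n_{≥0}, then for every term ordering <, in_{<_ω}(I) = in_ω(I), where <_ω is the refinement of ω by <. -/
open MvPolynomial

variable {n : ℕ}

namespace MonIniAux

variable {n : ℕ} {k : Type*} [CommSemiring k]

lemma wt_add (ω : Fin n → ℝ) (a b : Fin n →₀ ℕ) : wt ω (a + b) = wt ω a + wt ω b := by
  simp [wt, Finsupp.add_apply, Nat.cast_add, mul_add, Finset.sum_add_distrib]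

lemma coeff_filterSum (f : MvPolynomial (Fin n) k) (p : (Fin n →₀ ℕ) → Prop)
    [DecidablePred p] (β : Fin n →₀ ℕ) :
    coeff β (∑ α ∈ f.support.filter p, monomial α (coeff α f))
      = if p β then coeff β f else 0 := by
  classical
  rw [coeff_sum]
  simp only [coeff_monomial]
  rw [Finset.sum_ite_eq']
  by_cases hp : p β
  · by_cases hs : β ∈ f.support
    · simp [hp, hs]
    · simp [hp, hs, MvPolynomial.notMem_support_iff.1 hs]
  · simp [hp]

/-- The ω-weight-`d` homogeneous component of `f`. -/
noncomputable def wcomp (ω : Fin n → ℝ) (d : ℝ) (f : MvPolynomial (Fin n) k) :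
    MvPolynomial (Fin n) k :=
  ∑ α ∈ f.support.filter (fun α => wt ω α = d), monomial α (coeff α f)

lemma coeff_wcomp (ω : Fin n → ℝ) (d : ℝ) (f : MvPolynomial (Fin n) k) (β : Fin n →₀ ℕ) :
    coeff β (wcomp ω d f) = if wt ω β = d then coeff β f else 0 :=
  coeff_filterSum f _ β

lemma coeff_initialForm (ω : Fin n → ℝ) (f : MvPolynomial (Fin n) k) (β : Fin n →₀ ℕ) :
    coeff β (initialForm ω f)
      = if (∀ γ ∈ f.support, wt ω γ ≤ wt ω β) then coeff β f else 0 :=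
  coeff_filterSum f _ β

lemma homog_wcomp (ω : Fin n → ℝ) (d : ℝ) (f : MvPolynomial (Fin n) k) :
    ∀ α ∈ (wcomp ω d f).support, wt ω α = d := by
  intro α hα
  by_contra h
  exact (mem_support_iff.1 hα) (by rw [coeff_wcomp, if_neg h])

lemma wcomp_mul_homog (ω : Fin n → ℝ) (c d : ℝ) (p f : MvPolynomial (Fin n) k)
    (hp : ∀ α ∈ p.support, wt ω α = c) :
    wcomp ω d (p * f) = p * wcomp ω (d - c) f := by
  classical
  apply MvPolynomial.ext
  intro β
  rw [coeff_wcomp, coeff_mul, coeff_mul]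
  simp only [coeff_wcomp]
  split_ifs with h
  · refine Finset.sum_congr rfl fun x hx => ?_
    by_cases hu : coeff x.1 p = 0
    · simp [hu]
    · have hw : wt ω x.1 = c := hp _ (mem_support_iff.2 hu)
      have hadd : x.1 + x.2 = β := Finset.HasAntidiagonal.mem_antidiagonal.1 hx
      have hv : wt ω x.2 = d - c := by
        have h2 := wt_add ω x.1 x.2
        rw [hadd] at h2
        rw [h] at h2
        rw [hw] at h2
        linarith
      rw [if_pos hv]
  · symm
    refine Finset.sum_eq_zero fun x hx => ?_
    by_cases hu : coeff x.1 p = 0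
    · simp [hu]
    · have hw : wt ω x.1 = c := hp _ (mem_support_iff.2 hu)
      have hadd : x.1 + x.2 = β := Finset.HasAntidiagonal.mem_antidiagonal.1 hx
      split_ifs with hv
      · exfalso
        apply h
        have h2 := wt_add ω x.1 x.2
        rw [hadd] at h2
        rw [hw, hv] at h2
        linarith
      · rw [mul_zero]

lemma wcomp_sum {ι : Type*} (ω : Fin n → ℝ) (d : ℝ) (s : Finset ι)
    (F : ι → MvPolynomial (Fin n) k) :
    wcomp ω d (∑ i ∈ s, F i) = ∑ i ∈ s, wcomp ω d (F i) := by
  apply MvPolynomial.ext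
  intro β
  by_cases h : wt ω β = d <;> simp [coeff_wcomp, coeff_sum, h]

lemma finset_exists_max (t : TermOrder n) (s : Finset (Fin n →₀ ℕ)) (hs : s.Nonempty) :
    ∃ α ∈ s, ∀ β ∈ s, β ≠ α → t.lt β α := by
  classical
  induction s using Finset.induction_on with
  | empty => exact absurd hs (by simp)
  | @insert a s' ha ih =>
    rcases s'.eq_empty_or_nonempty with rfl | hs'
    · refine ⟨a, by simp, ?_⟩
      intro β hβ hne
      simp only [Finset.mem_insert, Finset.notMem_empty, or_false] at hβ
      exact absurd hβ hne
    · obtain ⟨α, hαs, hmax⟩ := ih hs'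
      rcases t.trichotomous a α with h | h | h
      · refine ⟨α, Finset.mem_insert_of_mem hαs, ?_⟩
        intro β hβ hne
        rcases Finset.mem_insert.1 hβ with rfl | hβ'
        · exact h
        · exact hmax β hβ' hne
      · subst h
        exact absurd hαs ha
      · refine ⟨a, Finset.mem_insert_self a s', ?_⟩
        intro β hβ hne
        rcases Finset.mem_insert.1 hβ with rfl | hβ'
        · exact absurd rfl hne
        · by_cases hβα : β = α
          · subst hβα; exact h
          · exact t.trans _ _ _ (hmax β hβ' hβα) h

lemma exists_isLeadExp (t : TermOrder n) (f : MvPolynomial (Fin n) k) (hf : f ≠ 0) :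
    ∃ α, t.IsLeadExp f α := by
  obtain ⟨α, hα, hmax⟩ := finset_exists_max t f.support (support_nonempty.2 hf)
  exact ⟨α, hα, hmax⟩

lemma isLeadExp_unique (t : TermOrder n) (f : MvPolynomial (Fin n) k)
    {α β : Fin n →₀ ℕ} (h1 : t.IsLeadExp f α) (h2 : t.IsLeadExp f β) : α = β := by
  by_contra hne
  exact t.irrefl α (t.trans _ _ _ (h2.2 α h1.1 hne) (h1.2 β h2.1 (Ne.symm hne)))

lemma leadExp_eq (t : TermOrder n) (f : MvPolynomial (Fin n) k) {α : Fin n →₀ ℕ}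
    (h : t.IsLeadExp f α) : t.leadExp f = α := by
  have hex : ∃ γ, t.IsLeadExp f γ := ⟨α, h⟩
  rw [TermOrder.leadExp, dif_pos hex]
  exact isLeadExp_unique t f hex.choose_spec h

lemma initialForm_eq_wcomp (ω : Fin n → ℝ) (f : MvPolynomial (Fin n) k)
    (hf : f.support.Nonempty) :
    initialForm ω f = wcomp ω (f.support.sup' hf (wt ω)) f := by
  apply MvPolynomial.ext
  intro β
  rw [coeff_initialForm, coeff_wcomp]
  obtain ⟨b, hb, hbe⟩ := Finset.exists_mem_eq_sup' hf (wt ω)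
  by_cases hβ : coeff β f = 0
  · simp [hβ]
  · have hβs : β ∈ f.support := mem_support_iff.2 hβ
    by_cases h : wt ω β = f.support.sup' hf (wt ω)
    · rw [if_pos h, if_pos]
      intro γ hγ
      rw [h]
      exact Finset.le_sup' _ hγ
    · rw [if_neg h, if_neg]
      intro hall
      exact h (le_antisymm (Finset.le_sup' _ hβs) (hbe ▸ hall b hb))

end MonIniAux

open MonIniAux
/-- If the generalized initial ideal `in_ω(I)` is a monomial ideal, then
for every term ordering `t`, the refinement `<_ω` of `ω` by `t` satisfies
`in_{<_ω}(I) = in_ω(I)`. -/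
theorem monomial_initial_ideal_refinement {k : Type*} [Field k]
    (I : Ideal (MvPolynomial (Fin n) k)) (ω : Fin n → ℝ) (hω : ∀ i, 0 ≤ ω i)
    (hmon : ∃ S : Set (Fin n →₀ ℕ),
        initialIdealW ω I = Ideal.span ((fun α => (monomial α (1 : k))) '' S)) :
    ∀ t t' : TermOrder n, t'.lt = refineLt ω t →
      initialIdealT t' I = initialIdealW ω I := by
  classical
  obtain ⟨S, hS⟩ := hmon
  intro t t' ht'
  apply le_antisymm
  · -- in_{t'}(I) ⊆ in_ω(I)
    rw [initialIdealT, Ideal.span_le]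
    rintro p ⟨f, hfI, hf0, rfl⟩
    obtain ⟨α, hlead⟩ := exists_isLeadExp t' f hf0
    have hle : t'.leadExp f = α := leadExp_eq t' f hlead
    have hαs : α ∈ f.support := hlead.1
    have hwmax : ∀ γ ∈ f.support, wt ω γ ≤ wt ω α := by
      intro γ hγ
      by_cases hγα : γ = α
      · rw [hγα]
      · have h := hlead.2 γ hγ hγα
        rw [ht'] at h
        rcases h with h | h
        · exact le_of_lt h
        · exact le_of_eq h.1
    have hcoeff : coeff α (initialForm ω f) = coeff α f := by
      rw [coeff_initialForm, if_pos hwmax]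
    have hin : initialForm ω f ∈ initialIdealW ω I :=
      Ideal.subset_span ⟨f, hfI, hf0, rfl⟩
    rw [hS] at hin
    obtain ⟨si, hsi, hsile⟩ := (mem_ideal_span_monomial_image.1 hin) α
      (by rw [mem_support_iff, hcoeff]; exact mem_support_iff.1 hαs)
    show t'.leadTerm f ∈ initialIdealW ω I
    rw [TermOrder.leadTerm, hle, hS, mem_ideal_span_monomial_image]
    intro xi hxi
    have hxiα : α = xi := by
      by_contra hne
      exact (mem_support_iff.1 hxi) (by rw [coeff_monomial, if_neg hne])
    exact ⟨si, hsi, hxiα ▸ hsile⟩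
  · -- in_ω(I) ⊆ in_{t'}(I)
    rw [hS, Ideal.span_le]
    rintro p ⟨si, hsiS, rfl⟩
    have hmem : (monomial si (1 : k)) ∈ Submodule.span (MvPolynomial (Fin n) k)
        {p | ∃ f ∈ I, f ≠ 0 ∧ p = initialForm ω f} := by
      have : (monomial si (1 : k)) ∈ initialIdealW ω I := by
        rw [hS]; exact Ideal.subset_span ⟨si, hsiS, rfl⟩
      exact this
    obtain ⟨c, hcsupp, hcsum⟩ := Submodule.mem_span_set.1 hmem
    set d : ℝ := wt ω si with hd
    have hq : ∀ q : MvPolynomial (Fin n) k, ∃ f : MvPolynomial (Fin n) k,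
        q ∈ c.support → f ∈ I ∧ f ≠ 0 ∧ q = initialForm ω f := by
      intro q
      by_cases h : q ∈ c.support
      · obtain ⟨f, hfI, hf0, hfq⟩ := hcsupp h
        exact ⟨f, fun _ => ⟨hfI, hf0, hfq⟩⟩
      · exact ⟨0, fun hh => absurd hh h⟩
    choose F hF using hq
    have hFne : ∀ q ∈ c.support, (F q).support.Nonempty :=
      fun q hqs => support_nonempty.2 (hF q hqs).2.1
    set e : MvPolynomial (Fin n) k → ℝ := fun q =>
      if h : (F q).support.Nonempty then (F q).support.sup' h (wt ω) else 0 with he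
    have heq : ∀ q ∈ c.support, q = wcomp ω (e q) (F q) := by
      intro q hqs
      have h1 : e q = (F q).support.sup' (hFne q hqs) (wt ω) := by
        simp only [he]
        rw [dif_pos (hFne q hqs)]
      rw [h1]
      conv_lhs => rw [(hF q hqs).2.2]
      exact initialForm_eq_wcomp ω (F q) (hFne q hqs)
    have hesup : ∀ q ∈ c.support, ∀ γ ∈ (F q).support, wt ω γ ≤ e q := by
      intro q hqs γ hγ
      rw [he]
      simp only [dif_pos (hFne q hqs)]
      exact Finset.le_sup' _ hγ
    set g : MvPolynomial (Fin n) k :=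
      ∑ q ∈ c.support, wcomp ω (d - e q) (c q) * F q with hg
    have hgI : g ∈ I :=
      Ideal.sum_mem I fun q hqs => I.mul_mem_left _ (hF q hqs).1
    have hsum : ∑ q ∈ c.support, c q * q = monomial si (1 : k) := by
      rw [← hcsum, Finsupp.sum]
      exact Finset.sum_congr rfl fun q _ => by rw [smul_eq_mul]
    have hkey : wcomp ω d g = monomial si (1 : k) := by
      have h1 : wcomp ω d g
          = ∑ q ∈ c.support, wcomp ω (d - e q) (c q) * wcomp ω (e q) (F q) := by
        rw [hg, wcomp_sum]
        refine Finset.sum_congr rfl fun q hqs => ?_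
        rw [wcomp_mul_homog ω (d - e q) d _ _ (homog_wcomp ω (d - e q) (c q)),
          show d - (d - e q) = e q by ring]
      have h2 : wcomp ω d (monomial si (1 : k))
          = ∑ q ∈ c.support, wcomp ω (d - e q) (c q) * wcomp ω (e q) (F q) := by
        rw [← hsum, wcomp_sum]
        refine Finset.sum_congr rfl fun q hqs => ?_
        have hqh : ∀ α ∈ q.support, wt ω α = e q := by
          intro α hα
          rw [heq q hqs] at hα
          exact homog_wcomp ω (e q) (F q) α hα
        rw [mul_comm, wcomp_mul_homog ω (e q) d _ _ hqh, mul_comm,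
          ← heq q hqs]
      have h3 : wcomp ω d (monomial si (1 : k)) = monomial si (1 : k) := by
        apply MvPolynomial.ext
        intro β
        rw [coeff_wcomp]
        by_cases hβ : si = β
        · subst hβ; rw [if_pos hd.symm]
        · rw [coeff_monomial, if_neg hβ, ite_self]
      rw [h1, ← h2, h3]
    have hcoeffsi : coeff si g = 1 := by
      have h := coeff_wcomp ω d g si
      rw [hkey, if_pos hd.symm, coeff_monomial, if_pos rfl] at h
      exact h.symm
    have hwle : ∀ β : Fin n →₀ ℕ, coeff β g ≠ 0 → wt ω β ≤ d := by
      intro β hβ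
      by_contra hlt
      push_neg at hlt
      apply hβ
      rw [hg, coeff_sum]
      refine Finset.sum_eq_zero fun q hqs => ?_
      rw [coeff_mul]
      refine Finset.sum_eq_zero fun x hx => ?_
      by_cases hu : coeff x.1 (wcomp ω (d - e q) (c q)) = 0
      · rw [hu, zero_mul]
      · by_cases hv : coeff x.2 (F q) = 0
        · rw [hv, mul_zero]
        · exfalso
          have hw1 : wt ω x.1 = d - e q :=
            homog_wcomp ω (d - e q) (c q) _ (mem_support_iff.2 hu)
          have hw2 : wt ω x.2 ≤ e q := hesup q hqs _ (mem_support_iff.2 hv)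
          have hadd : x.1 + x.2 = β := Finset.HasAntidiagonal.mem_antidiagonal.1 hx
          have h2 := wt_add ω x.1 x.2
          rw [hadd, hw1] at h2
          linarith
    have hsig : si ∈ g.support := mem_support_iff.2 (by rw [hcoeffsi]; exact one_ne_zero)
    have hlead : t'.IsLeadExp g si := by
      refine ⟨hsig, fun β hβ hne => ?_⟩
      have hble := hwle β (mem_support_iff.1 hβ)
      rcases lt_or_eq_of_le hble with h | h
      · rw [ht']
        exact Or.inl (hd ▸ h)
      · exfalso
        have hcb : coeff β g = coeff β (wcomp ω d g) := by
          rw [coeff_wcomp, if_pos h]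
        rw [hkey, coeff_monomial, if_neg (fun hc => hne hc.symm)] at hcb
        exact (mem_support_iff.1 hβ) hcb
    have hle2 : t'.leadExp g = si := leadExp_eq t' g hlead
    have hg0 : g ≠ 0 := by
      intro h
      rw [h, coeff_zero] at hcoeffsi
      exact one_ne_zero hcoeffsi.symm
    have hterm : t'.leadTerm g = monomial si (1 : k) := by
      rw [TermOrder.leadTerm, hle2, hcoeffsi]
    show monomial si (1 : k) ∈ initialIdealT t' I
    rw [← hterm]
    exact Ideal.subset_span ⟨g, hgI, hg0, rfl⟩
end
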